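/- arXiv:2305.01031 — 3 statements merged into one kernel-verified Lean document; each statement's English description precedes it below -/
import Mathlib

section
/- Palais–Smale boundedness via the AR condition: suppose f satisfies t f(x,t) ≥ β F(x,t) for |t| ≥ r₀ with β > 2, and (u_k) is a sequence of functions on D vanishing on ∂D such that |J_λ(u_k)| ≤ c and ‖J_λ'(u_k)‖ → 0 as k → ∞, where J_λ(u) = (1/(2λ))‖u‖² − ∫_D F(x,u) dμ. Then the sequence (u_k) is bounded in the Dirichlet norm ‖u‖ = (∫_D |∇u|² dμ)^{1/2}. -/
open Finset Filter

noncomputable def gInt {V : Type*} [Fintype V] (mu : V → ℝ) (D : Finset V) (f : V → ℝ) : ℝ :=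
  ∑ x ∈ D, mu x * f x

noncomputable def slopeSq {V : Type*} [Fintype V] (w : V → V → ℝ) (mu : V → ℝ)
    (u : V → ℝ) (x : V) : ℝ :=
  (1 / (2 * mu x)) * ∑ y, w x y * (u y - u x) ^ 2

noncomputable def gammaF {V : Type*} [Fintype V] (w : V → V → ℝ) (mu : V → ℝ)
    (u v : V → ℝ) (x : V) : ℝ :=
  (1 / (2 * mu x)) * ∑ y, w x y * (u y - u x) * (v y - v x)

noncomputable def lapl {V : Type*} [Fintype V] (w : V → V → ℝ) (mu : V → ℝ)
    (u : V → ℝ) (x : V) : ℝ :=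
  (1 / mu x) * ∑ y, w x y * (u y - u x)

noncomputable def rayleighSet {V : Type*} [Fintype V] (w : V → V → ℝ) (mu : V → ℝ)
    (D B : Finset V) : Set ℝ :=
  {r | ∃ u : V → ℝ, (∀ x ∈ B, u x = 0) ∧ (∃ x ∈ D, u x ≠ 0) ∧
    r = gInt mu D (slopeSq w mu u) / gInt mu D (fun x => (u x) ^ 2)}

theorem stmt_11 {V : Type*} [Fintype V] [DecidableEq V]
    (w : V → V → ℝ) (hsymm : ∀ x y, w x y = w y x)
    (hnonneg : ∀ x y, 0 ≤ w x y) (hdiag : ∀ x, w x x = 0)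
    (mu : V → ℝ) (hmu : ∀ x, 0 < mu x)
    (D B : Finset V) (hBD : B ⊆ D)
    (hbdry : ∀ x ∈ D, (x ∈ B ↔ ∃ y, y ∉ D ∧ 0 < w x y))
    (hBne : B.Nonempty) (hIne : (D \ B).Nonempty)
    (f : V → ℝ → ℝ) (hf : ∀ x, Continuous (f x))
    (beta r0 : ℝ) (hbeta : 2 < beta) (hr0 : 0 < r0)
    (hAR : ∀ x ∈ D, ∀ t : ℝ, r0 ≤ |t| →
      t * f x t ≥ beta * ∫ s in (0:ℝ)..t, f x s)
    (lam : ℝ) (hlam : 0 < lam)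
    (u : ℕ → V → ℝ) (hu : ∀ k x, x ∉ D \ B → u k x = 0)
    (c : ℝ)
    (hc : ∀ k, |(1 / (2 * lam)) * gInt mu D (slopeSq w mu (u k))
      - gInt mu D (fun x => ∫ s in (0:ℝ)..(u k x), f x s)| ≤ c)
    (eps : ℕ → ℝ) (heps : Tendsto eps atTop (nhds 0))
    (heps' : ∀ k (v : V → ℝ), (∀ x, x ∉ D \ B → v x = 0) →
      |(1 / lam) * gInt mu D (gammaF w mu (u k) v)
        - gInt mu D (fun x => f x (u k x) * v x)| ≤
        eps k * Real.sqrt (gInt mu D (slopeSq w mu v))) :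
    ∃ M : ℝ, ∀ k, Real.sqrt (gInt mu D (slopeSq w mu (u k))) ≤ M := by
  classical
  -- nonnegativity of slopeSq and its integral
  have hslope : ∀ (v : V → ℝ) (x : V), 0 ≤ slopeSq w mu v x := by
    intro v x
    unfold slopeSq
    have hx := hmu x
    apply mul_nonneg (by positivity)
    exact Finset.sum_nonneg fun y _ => mul_nonneg (hnonneg x y) (sq_nonneg _)
  have hN0 : ∀ k, 0 ≤ gInt mu D (slopeSq w mu (u k)) := fun k =>
    Finset.sum_nonneg fun x _ => mul_nonneg (hmu x).le (hslope _ x)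
  -- gammaF of u with itself equals slopeSq
  have hgamma : ∀ k, gInt mu D (gammaF w mu (u k) (u k)) = gInt mu D (slopeSq w mu (u k)) := by
    intro k
    unfold gInt gammaF slopeSq
    refine Finset.sum_congr rfl fun x _ => ?_
    congr 2
    exact Finset.sum_congr rfl fun y _ => by ring
  -- bound for eps
  obtain ⟨E0, hE0⟩ := heps.bddAbove_range
  set E : ℝ := max E0 0 with hEdef
  have hE : ∀ k, eps k ≤ E := fun k => le_trans (hE0 ⟨k, rfl⟩) (le_max_left _ _)
  have hEpos : 0 ≤ E := le_max_right _ _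
  -- pointwise bound on beta*F - t*f via compactness
  have hcont : ∀ x : V, Continuous
      (fun t : ℝ => beta * (∫ s in (0:ℝ)..t, f x s) - f x t * t) := by
    intro x
    have h1 : Continuous fun t : ℝ => ∫ s in (0:ℝ)..t, f x s :=
      intervalIntegral.continuous_primitive (fun a b => (hf x).intervalIntegrable a b) 0
    exact (continuous_const.mul h1).sub ((hf x).mul continuous_id)
  choose Cx hCx using fun x : V =>
    (isCompact_Icc (a := -r0) (b := r0)).exists_bound_of_continuousOn (hcont x).continuousOn
  set C : ℝ := ∑ x ∈ D, mu x * max (Cx x) 0 with hCdef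
  have hC0 : 0 ≤ C :=
    Finset.sum_nonneg fun x _ => mul_nonneg (hmu x).le (le_max_right _ _)
  have hpt : ∀ k, ∀ x ∈ D,
      beta * (∫ s in (0:ℝ)..(u k x), f x s) - f x (u k x) * (u k x) ≤ max (Cx x) 0 := by
    intro k x hx
    rcases le_or_gt r0 |u k x| with h | h
    · have hAR' := hAR x hx (u k x) h
      have : beta * (∫ s in (0:ℝ)..(u k x), f x s) - f x (u k x) * (u k x) ≤ 0 := by
        nlinarith [hAR']
      exact this.trans (le_max_right _ _)
    · have hm : u k x ∈ Set.Icc (-r0) r0 := by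
        have := abs_le.mp h.le
        exact ⟨this.1, this.2⟩
      have hb := hCx x _ hm
      rw [Real.norm_eq_abs] at hb
      exact le_trans (le_abs_self _) (hb.trans (le_max_left _ _))
  -- the sum bound
  have hsum : ∀ k,
      beta * gInt mu D (fun x => ∫ s in (0:ℝ)..(u k x), f x s)
        - gInt mu D (fun x => f x (u k x) * u k x) ≤ C := by
    intro k
    unfold gInt
    rw [Finset.mul_sum, ← Finset.sum_sub_distrib, hCdef]
    apply Finset.sum_le_sum
    intro x hx
    have h1 := hpt k x hx
    beta_reduce
    nlinarith [(hmu x).le, mul_le_mul_of_nonneg_left h1 (hmu x).le]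
  -- main bound
  set K : ℝ := 2 * lam * C + 2 * beta * lam * c + 2 * lam * E with hKdef
  have hc0 : 0 ≤ c := le_trans (abs_nonneg _) (hc 0)
  have hK0 : 0 ≤ K := by
    have : (0:ℝ) < beta := by linarith
    positivity
  refine ⟨max 1 (K / (beta - 2)), fun k => ?_⟩
  set N : ℝ := gInt mu D (slopeSq w mu (u k)) with hNdef
  set s : ℝ := Real.sqrt N with hsdef
  have hs0 : 0 ≤ s := Real.sqrt_nonneg _
  have hs2 : s ^ 2 = N := Real.sq_sqrt (hN0 k)
  set P : ℝ := gInt mu D (fun x => ∫ s in (0:ℝ)..(u k x), f x s) with hPdef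
  set Q : ℝ := gInt mu D (fun x => f x (u k x) * u k x) with hQdef
  have h1 := hc k
  have h2 := heps' k (u k) (hu k)
  rw [hgamma k] at h2
  rw [← hNdef, ← hPdef] at h1
  rw [← hNdef, ← hQdef, ← hsdef] at h2
  have h3 := hsum k
  rw [← hPdef, ← hQdef] at h3
  -- derive scalar inequalities
  have kb1 : N ≤ 2 * lam * P + 2 * lam * c := by
    have h := (abs_le.mp h1).2
    have h' := mul_le_mul_of_nonneg_left h (by positivity : (0:ℝ) ≤ 2 * lam)
    have e : 2 * lam * ((1 / (2 * lam)) * N - P) = N - 2 * lam * P := by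
      field_simp
    linarith [e ▸ h']
  have kb2 : -N ≤ lam * (eps k * s) - lam * Q := by
    have h := (abs_le.mp h2).1
    have h' := mul_le_mul_of_nonneg_left h (le_of_lt hlam)
    have e : lam * ((1 / lam) * N - Q) = N - lam * Q := by
      field_simp
    nlinarith [e ▸ h']
  have hes : lam * (eps k * s) ≤ lam * (E * s) := by
    have := mul_le_mul_of_nonneg_right (hE k) hs0
    nlinarith [hlam.le]
  have key : (beta - 2) * N ≤ K + 2 * lam * E * s - 2 * lam * E := by
    have t1 := mul_le_mul_of_nonneg_left kb1 (by linarith : (0:ℝ) ≤ beta)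
    have t3 := mul_le_mul_of_nonneg_left h3 (by positivity : (0:ℝ) ≤ 2 * lam)
    nlinarith [t1, t3, kb2, hes]
  -- conclude
  rcases le_or_gt s 1 with h | h
  · exact h.trans (le_max_left _ _)
  · refine le_trans ?_ (le_max_right _ _)
    rw [le_div_iff₀ (by linarith : (0:ℝ) < beta - 2)]
    have h4 : (beta - 2) * s ^ 2 ≤ K + 2 * lam * E * s - 2 * lam * E := by
      rw [hs2]; exact key
    rw [hKdef] at h4 ⊢
    have hs1 : (0:ℝ) ≤ s - 1 := by linarith
    nlinarith [h4, hs1, hs0, mul_nonneg (mul_nonneg hlam.le hC0) hs1,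
      mul_nonneg (mul_nonneg (mul_nonneg (by linarith : (0:ℝ) ≤ beta) hlam.le) hc0) hs1]
end

section
/- Nonnegativity of solutions: let α : D → ℝ with α ≤ 0 on D, and f₊ : D×ℝ → [0,∞) with f₊(x,t) = 0 for t < 0. If u vanishes on ∂D and solves −Δ_μ u(x) = α(x)u(x) + f₊(x,u⁺(x)) on D° in the weak sense, then ∫_D |∇u⁻|² dμ = 0 and hence u ≥ 0 on D, where u⁻ = max{−u,0}. -/
open Finset Filter

theorem stmt_13 {V : Type*} [Fintype V] [DecidableEq V]
    (w : V → V → ℝ) (hsymm : ∀ x y, w x y = w y x)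
    (hnonneg : ∀ x y, 0 ≤ w x y) (hdiag : ∀ x, w x x = 0)
    (mu : V → ℝ) (hmu : ∀ x, 0 < mu x)
    (D B : Finset V) (hBD : B ⊆ D)
    (hbdry : ∀ x ∈ D, (x ∈ B ↔ ∃ y, y ∉ D ∧ 0 < w x y))
    (hBne : B.Nonempty) (hIne : (D \ B).Nonempty)
    (hconn : ∀ x ∈ D, ∀ y ∈ D,
      Relation.ReflTransGen (fun a b => a ∈ D ∧ b ∈ D ∧ 0 < w a b) x y)
    (alpha : V → ℝ) (halpha : ∀ x ∈ D, alpha x ≤ 0)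
    (fp : V → ℝ → ℝ) (hfp0 : ∀ x t, 0 ≤ fp x t) (hfpneg : ∀ x t, t < 0 → fp x t = 0)
    (u : V → ℝ) (hu : ∀ x, x ∉ D \ B → u x = 0)
    (hweak : ∀ v : V → ℝ, (∀ x, x ∉ D \ B → v x = 0) →
      gInt mu D (gammaF w mu u v) - gInt mu D (fun x => alpha x * u x * v x) =
        gInt mu D (fun x => fp x (max (u x) 0) * v x)) :
    gInt mu D (slopeSq w mu (fun z => max (-(u z)) 0)) = 0 ∧ ∀ x ∈ D, 0 ≤ u x := by
  have key : ∀ a b : ℝ,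
      (max (-b) 0 - max (-a) 0) ^ 2 ≤ (a - b) * (max (-b) 0 - max (-a) 0) := by
    intro a b
    rcases le_total a 0 with ha | ha <;> rcases le_total b 0 with hb | hb
    · rw [max_eq_left (neg_nonneg.mpr ha), max_eq_left (neg_nonneg.mpr hb)]; nlinarith
    · rw [max_eq_left (neg_nonneg.mpr ha), max_eq_right (neg_nonpos.mpr hb)]; nlinarith
    · rw [max_eq_right (neg_nonpos.mpr ha), max_eq_left (neg_nonneg.mpr hb)]; nlinarith
    · rw [max_eq_right (neg_nonpos.mpr ha), max_eq_right (neg_nonpos.mpr hb)]; nlinarith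
  set un : V → ℝ := fun z => max (-(u z)) 0 with hun
  have hun_nonneg : ∀ x, 0 ≤ un x := fun x => le_max_right _ _
  have hunz : ∀ x, x ∉ D \ B → un x = 0 := by
    intro x hx; simp [hun, hu x hx]
  have hw := hweak un hunz
  -- the alpha term is nonnegative
  have hB0 : 0 ≤ gInt mu D (fun x => alpha x * u x * un x) := by
    apply Finset.sum_nonneg
    intro x hx
    have h1 : alpha x * u x * un x = (-alpha x) * (un x) ^ 2 := by
      rcases le_total (u x) 0 with h | h
      · simp only [hun, max_eq_left (neg_nonneg.mpr h)]; ring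
      · simp only [hun, max_eq_right (neg_nonpos.mpr h)]; ring
    show 0 ≤ mu x * (alpha x * u x * un x)
    rw [h1]
    exact mul_nonneg (hmu x).le
      (mul_nonneg (neg_nonneg.mpr (halpha x hx)) (sq_nonneg _))
  -- the fp term is nonnegative
  have hC0 : 0 ≤ gInt mu D (fun x => fp x (max (u x) 0) * un x) := by
    apply Finset.sum_nonneg
    intro x _
    exact mul_nonneg (hmu x).le (mul_nonneg (hfp0 _ _) (hun_nonneg x))
  have hA0 : 0 ≤ gInt mu D (gammaF w mu u un) := by linarith
  -- the slope term is bounded by minus the gamma term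
  have hS_le : gInt mu D (slopeSq w mu un) ≤ -gInt mu D (gammaF w mu u un) := by
    have : -gInt mu D (gammaF w mu u un)
        = ∑ x ∈ D, mu x * (-(gammaF w mu u un x)) := by
      simp [gInt, mul_neg, Finset.sum_neg_distrib]
    rw [this]
    apply Finset.sum_le_sum
    intro x _
    have hc : (0:ℝ) ≤ mu x * (1 / (2 * mu x)) :=
      mul_nonneg (hmu x).le (one_div_nonneg.mpr (by linarith [hmu x]))
    have hS : (∑ y, w x y * (un y - un x) ^ 2)
        ≤ -∑ y, w x y * (u y - u x) * (un y - un x) := by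
      rw [← Finset.sum_neg_distrib]
      apply Finset.sum_le_sum
      intro y _
      have hk := key (u x) (u y)
      nlinarith [mul_le_mul_of_nonneg_left hk (hnonneg x y)]
    have expand : mu x * (-(gammaF w mu u un x))
        = (mu x * (1 / (2 * mu x))) * (-∑ y, w x y * (u y - u x) * (un y - un x)) := by
      simp [gammaF]; ring
    have expand2 : mu x * slopeSq w mu un x
        = (mu x * (1 / (2 * mu x))) * (∑ y, w x y * (un y - un x) ^ 2) := by
      simp [slopeSq]; ring
    rw [expand, expand2]
    exact mul_le_mul_of_nonneg_left hS hc
  -- slope term is nonnegative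
  have hS_nonneg : ∀ x ∈ D, 0 ≤ mu x * slopeSq w mu un x := by
    intro x _
    apply mul_nonneg (hmu x).le
    apply mul_nonneg (one_div_nonneg.mpr (by linarith [hmu x]))
    exact Finset.sum_nonneg fun y _ => mul_nonneg (hnonneg x y) (sq_nonneg _)
  have hSzero : gInt mu D (slopeSq w mu un) = 0 := by
    have h1 : 0 ≤ gInt mu D (slopeSq w mu un) := Finset.sum_nonneg hS_nonneg
    linarith
  refine ⟨hSzero, ?_⟩
  -- from the vanishing energy, un is constant along edges inside D
  have hzero : ∀ x ∈ D, ∀ y, 0 < w x y → un y = un x := by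
    intro x hx y hwxy
    have hterm : mu x * slopeSq w mu un x = 0 :=
      (Finset.sum_eq_zero_iff_of_nonneg hS_nonneg).mp hSzero x hx
    have hsum : (∑ y, w x y * (un y - un x) ^ 2) = 0 := by
      have hmux : mu x * (1 / (2 * mu x)) ≠ 0 :=
        (mul_pos (hmu x) (one_div_pos.mpr (by linarith [hmu x]))).ne'
      have : (mu x * (1 / (2 * mu x))) * (∑ y, w x y * (un y - un x) ^ 2) = 0 := by
        rw [← hterm]; simp [slopeSq]; ring
      exact (mul_eq_zero.mp this).resolve_left hmux
    have hy : w x y * (un y - un x) ^ 2 = 0 :=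
      (Finset.sum_eq_zero_iff_of_nonneg
        (fun y _ => mul_nonneg (hnonneg x y) (sq_nonneg _))).mp hsum y (Finset.mem_univ y)
    have : (un y - un x) ^ 2 = 0 := (mul_eq_zero.mp hy).resolve_left hwxy.ne'
    have := pow_eq_zero_iff (n := 2) (by norm_num) |>.mp this
    linarith [sub_eq_zero.mp this]
  have hconst : ∀ a b : V,
      Relation.ReflTransGen (fun a b => a ∈ D ∧ b ∈ D ∧ 0 < w a b) a b → un a = un b := by
    intro a b h
    induction h with
    | refl => rfl
    | tail _ hstep ih =>
      obtain ⟨hc, _, hwp⟩ := hstep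
      rw [ih]
      exact (hzero _ hc _ hwp).symm
  obtain ⟨b, hb⟩ := hBne
  have hunb : un b = 0 := hunz b (by simp [Finset.mem_sdiff, hb])
  intro x hx
  have hx0 : un x = 0 := (hconst x b (hconn x hx b (hBD hb))).trans hunb
  have := le_max_left (-(u x)) (0:ℝ)
  rw [show max (-(u x)) 0 = un x from rfl, hx0] at this
  linarith
end

section
/- Existence of a positive solution for the graph Yamabe-type equation: let D be a finite connected graph domain with nonempty interior and boundary, γ < λ₁ and p > 2. Then there exists u : D → ℝ with u = 0 on ∂D and u(x) > 0 for all x ∈ D°, satisfying −Δ_μ u(x) = γ u(x) + u(x)^{p−1} for every x ∈ D°. -/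
open Finset Filter

set_option linter.unusedSectionVars false
section helpers
variable {V : Type*} [Fintype V] [DecidableEq V]

noncomputable def Q2 (w : V → V → ℝ) (D : Finset V) (u v : V → ℝ) : ℝ :=
  ∑ x ∈ D, ∑ y, w x y * (u y - u x) * (v y - v x)

noncomputable def delt (d : V) : V → ℝ := fun z => if z = d then 1 else 0

lemma gInt_slopeSq_eq (w : V → V → ℝ) (mu : V → ℝ) (hmu : ∀ x, 0 < mu x)
    (D : Finset V) (u : V → ℝ) :
    gInt mu D (slopeSq w mu u) = (1/2) * Q2 w D u u := by
  unfold gInt slopeSq Q2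
  rw [Finset.mul_sum]
  refine Finset.sum_congr rfl fun x _ => ?_
  have h : mu x ≠ 0 := (hmu x).ne'
  rw [Finset.mul_sum, Finset.mul_sum, Finset.mul_sum]
  refine Finset.sum_congr rfl fun y _ => ?_
  field_simp

lemma gInt_gammaF_eq (w : V → V → ℝ) (mu : V → ℝ) (hmu : ∀ x, 0 < mu x)
    (D : Finset V) (u v : V → ℝ) :
    gInt mu D (gammaF w mu u v) = (1/2) * Q2 w D u v := by
  unfold gInt gammaF Q2
  rw [Finset.mul_sum]
  refine Finset.sum_congr rfl fun x _ => ?_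
  have h : mu x ≠ 0 := (hmu x).ne'
  rw [Finset.mul_sum, Finset.mul_sum, Finset.mul_sum]
  refine Finset.sum_congr rfl fun y _ => ?_
  field_simp

lemma Q2_pert (w : V → V → ℝ) (D : Finset V) (u : V → ℝ) (d : V) (t : ℝ) :
    Q2 w D (fun z => u z + t * delt d z) (fun z => u z + t * delt d z)
      = Q2 w D u u + 2 * t * Q2 w D u (delt d) + t ^ 2 * Q2 w D (delt d) (delt d) := by
  unfold Q2
  rw [Finset.mul_sum, Finset.mul_sum, ← Finset.sum_add_distrib, ← Finset.sum_add_distrib]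
  refine Finset.sum_congr rfl fun x _ => ?_
  rw [Finset.mul_sum, Finset.mul_sum, ← Finset.sum_add_distrib, ← Finset.sum_add_distrib]
  refine Finset.sum_congr rfl fun y _ => ?_
  ring

lemma Q2_comm (w : V → V → ℝ) (D : Finset V) (u v : V → ℝ) :
    Q2 w D u v = Q2 w D v u := by
  unfold Q2
  refine Finset.sum_congr rfl fun x _ => Finset.sum_congr rfl fun y _ => by ring

lemma Q2_smul (w : V → V → ℝ) (D : Finset V) (u : V → ℝ) (s : ℝ) :
    Q2 w D (fun z => s * u z) (fun z => s * u z) = s ^ 2 * Q2 w D u u := by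
  unfold Q2
  rw [Finset.mul_sum]
  refine Finset.sum_congr rfl fun x _ => ?_
  rw [Finset.mul_sum]
  exact Finset.sum_congr rfl fun y _ => by ring

/-- Green's identity -/
lemma Q2_green (w : V → V → ℝ) (hsymm : ∀ x y, w x y = w y x)
    (hnonneg : ∀ x y, 0 ≤ w x y) (D : Finset V) (C : Finset V) (hCD : C ⊆ D)
    (hngh : ∀ a ∈ C, ∀ y, 0 < w a y → y ∈ D)
    (u v : V → ℝ) (hsupp : ∀ z, v z ≠ 0 → z ∈ C) :
    Q2 w D u v = -2 * ∑ x ∈ D, v x * ∑ y, w x y * (u y - u x) := by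
  have key1 : ∀ x y : V, w x y * (u y - u x) * (v y - v x)
      = w x y * (u y - u x) * v y - w x y * (u y - u x) * v x := fun x y => by ring
  have split : Q2 w D u v
      = (∑ x ∈ D, ∑ y, w x y * (u y - u x) * v y)
        - ∑ x ∈ D, v x * ∑ y, w x y * (u y - u x) := by
    unfold Q2
    rw [← Finset.sum_sub_distrib]
    refine Finset.sum_congr rfl fun x _ => ?_
    rw [Finset.mul_sum, ← Finset.sum_sub_distrib]
    exact Finset.sum_congr rfl fun y _ => by ring
  -- first sum equals the full sum over univ
  have hzero : ∀ x y : V, x ∉ D → w x y * (u y - u x) * v y = 0 := by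
    intro x y hx
    by_cases hv : v y = 0
    · rw [hv]; ring
    · have hyC : y ∈ C := hsupp y hv
      by_cases hw : w x y = 0
      · rw [hw]; ring
      · have : 0 < w y x := by
          rw [← hsymm]
          exact lt_of_le_of_ne (hnonneg x y) (Ne.symm hw)
        exact absurd (hngh y hyC x this) hx
  have ext1 : (∑ x ∈ D, ∑ y, w x y * (u y - u x) * v y)
      = ∑ x : V, ∑ y, w x y * (u y - u x) * v y := by
    exact (Finset.sum_subset (f := fun x => ∑ y, w x y * (u y - u x) * v y)
      (Finset.subset_univ D)
      (fun x _ hx => Finset.sum_eq_zero fun y _ => hzero x y hx))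
  have swap : (∑ x : V, ∑ y, w x y * (u y - u x) * v y)
      = -∑ x : V, v x * ∑ y, w x y * (u y - u x) := by
    rw [Finset.sum_comm, ← Finset.sum_neg_distrib]
    refine Finset.sum_congr rfl fun y _ => ?_
    rw [Finset.mul_sum, ← Finset.sum_neg_distrib]
    refine Finset.sum_congr rfl fun x _ => ?_
    rw [hsymm x y]
    ring
  have restrict : (∑ x : V, v x * ∑ y, w x y * (u y - u x))
      = ∑ x ∈ D, v x * ∑ y, w x y * (u y - u x) := by
    refine (Finset.sum_subset (f := fun x => v x * ∑ y, w x y * (u y - u x))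
      (Finset.subset_univ D) (fun x _ hx => ?_)).symm
    have hv : v x = 0 := by
      by_contra hv
      exact hx (hCD (hsupp x hv))
    simp [hv]
  rw [split, ext1, swap, restrict]
  ring

noncomputable def Nfun (mu : V → ℝ) (C : Finset V) (p : ℝ) (u : V → ℝ) : ℝ :=
  ∑ x ∈ C, mu x * |u x| ^ p

noncomputable def Jfun (w : V → V → ℝ) (mu : V → ℝ) (D : Finset V) (gam : ℝ)
    (u : V → ℝ) : ℝ :=
  gInt mu D (slopeSq w mu u) - gam * gInt mu D (fun x => (u x) ^ 2)

lemma sum_pert (S : Finset V) (d : V) (hd : d ∈ S) (g : V → ℝ → ℝ) (u : V → ℝ) (t : ℝ) :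
    ∑ x ∈ S, g x (u x + t * delt d x)
      = (∑ x ∈ S, g x (u x)) - g d (u d) + g d (u d + t) := by
  rw [Finset.sum_eq_sum_sdiff_singleton_add hd (fun x => g x (u x + t * delt d x)),
    Finset.sum_eq_sum_sdiff_singleton_add hd (fun x => g x (u x))]
  have h : ∀ x ∈ S \ {d}, g x (u x + t * delt d x) = g x (u x) := by
    intro x hx
    have hxd : x ≠ d := by
      rcases Finset.mem_sdiff.mp hx with ⟨_, h2⟩
      simpa using h2
    simp [delt, hxd]
  rw [Finset.sum_congr rfl h]
  simp [delt]

lemma Nfun_smul (mu : V → ℝ) (C : Finset V) (p : ℝ) (u : V → ℝ) (s : ℝ) :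
    Nfun mu C p (fun z => s * u z) = |s| ^ p * Nfun mu C p u := by
  unfold Nfun
  rw [Finset.mul_sum]
  refine Finset.sum_congr rfl fun x _ => ?_
  rw [abs_mul, Real.mul_rpow (abs_nonneg s) (abs_nonneg (u x))]
  ring

lemma Nfun_nonneg (mu : V → ℝ) (hmu : ∀ x, 0 < mu x) (C : Finset V) (p : ℝ) (u : V → ℝ) :
    0 ≤ Nfun mu C p u :=
  Finset.sum_nonneg fun x _ => mul_nonneg (hmu x).le (Real.rpow_nonneg (abs_nonneg _) p)

lemma gIntsq_smul (mu : V → ℝ) (D : Finset V) (u : V → ℝ) (s : ℝ) :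
    gInt mu D (fun x => (s * u x) ^ 2) = s ^ 2 * gInt mu D (fun x => (u x) ^ 2) := by
  unfold gInt
  rw [Finset.mul_sum]
  exact Finset.sum_congr rfl fun x _ => by ring

lemma gIntsq_pert (mu : V → ℝ) (D : Finset V) (d : V) (hd : d ∈ D) (u : V → ℝ) (t : ℝ) :
    gInt mu D (fun x => (u x + t * delt d x) ^ 2)
      = gInt mu D (fun x => (u x) ^ 2) + t * (2 * mu d * u d) + t ^ 2 * mu d := by
  unfold gInt
  rw [sum_pert D d hd (fun x s => mu x * s ^ 2) u t]
  ring

lemma Nfun_pert (mu : V → ℝ) (C : Finset V) (p : ℝ) (d : V) (hd : d ∈ C) (u : V → ℝ) (t : ℝ) :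
    Nfun mu C p (fun z => u z + t * delt d z)
      = Nfun mu C p u - mu d * |u d| ^ p + mu d * |u d + t| ^ p := by
  unfold Nfun
  rw [sum_pert C d hd (fun x s => mu x * |s| ^ p) u t]

lemma Nfun_continuous (mu : V → ℝ) (C : Finset V) (p : ℝ) (hp : 0 < p) :
    Continuous (Nfun mu C p) := by
  unfold Nfun
  refine continuous_finset_sum _ fun x _ => Continuous.mul continuous_const ?_
  exact ((continuous_apply x).abs).rpow_const fun u => Or.inr hp.le

lemma Jfun_continuous (w : V → V → ℝ) (mu : V → ℝ) (D : Finset V) (gam : ℝ) :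
    Continuous (Jfun w mu D gam) := by
  unfold Jfun gInt slopeSq
  refine Continuous.sub ?_ (Continuous.mul continuous_const ?_)
  · refine continuous_finset_sum _ fun x _ => Continuous.mul continuous_const ?_
    refine Continuous.mul continuous_const ?_
    refine continuous_finset_sum _ fun y _ => Continuous.mul continuous_const ?_
    exact (((continuous_apply y).sub (continuous_apply x))).pow 2
  · exact continuous_finset_sum _ fun x _ =>
      Continuous.mul continuous_const ((continuous_apply x).pow 2)


lemma Jfun_smul (w : V → V → ℝ) (mu : V → ℝ) (hmu : ∀ x, 0 < mu x) (D : Finset V)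
    (gam : ℝ) (u : V → ℝ) (s : ℝ) :
    Jfun w mu D gam (fun z => s * u z) = s ^ 2 * Jfun w mu D gam u := by
  unfold Jfun
  rw [gInt_slopeSq_eq w mu hmu, gInt_slopeSq_eq w mu hmu, Q2_smul, gIntsq_smul]
  ring

lemma Jfun_pert (w : V → V → ℝ) (mu : V → ℝ) (hmu : ∀ x, 0 < mu x) (D : Finset V)
    (gam : ℝ) (d : V) (hd : d ∈ D) (u : V → ℝ) (t : ℝ) :
    Jfun w mu D gam (fun z => u z + t * delt d z)
      = Jfun w mu D gam u + t * (Q2 w D u (delt d) - 2 * gam * mu d * u d)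
        + t ^ 2 * ((1/2) * Q2 w D (delt d) (delt d) - gam * mu d) := by
  unfold Jfun
  rw [gInt_slopeSq_eq w mu hmu, gInt_slopeSq_eq w mu hmu, Q2_pert, gIntsq_pert mu D d hd]
  ring

lemma Q2_delta (w : V → V → ℝ) (hsymm : ∀ x y, w x y = w y x)
    (hnonneg : ∀ x y, 0 ≤ w x y) (D C : Finset V) (hCD : C ⊆ D)
    (hngh : ∀ a ∈ C, ∀ y, 0 < w a y → y ∈ D)
    (u : V → ℝ) (d : V) (hd : d ∈ C) :
    Q2 w D u (delt d) = -2 * ∑ y, w d y * (u y - u d) := by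
  have hsupp : ∀ z, delt d z ≠ 0 → z ∈ C := by
    intro z hz
    have hzd : z = d := by
      by_contra h
      simp [delt, h] at hz
    exact hzd ▸ hd
  rw [Q2_green w hsymm hnonneg D C hCD hngh u (delt d) hsupp]
  congr 1
  rw [Finset.sum_eq_single_of_mem d (hCD hd)
    (fun x _ hxd => by simp [delt, hxd])]
  simp [delt]

lemma chain_lemma {r : V → V → Prop} (u : V → ℝ) (hnn : ∀ z, 0 ≤ u z)
    {a b : V} (h : Relation.ReflTransGen r a b) (ha : 0 < u a) (hb : u b = 0) :
    ∃ c d, r c d ∧ 0 < u c ∧ u d = 0 := by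
  revert hb
  induction h with
  | refl => exact fun hb => absurd hb (by positivity)
  | tail h1 h2 ih =>
    intro hb
    rename_i b' c'
    by_cases hb' : u b' = 0
    · exact ih hb'
    · exact ⟨b', c', h2, lt_of_le_of_ne (hnn b') (Ne.symm hb'), hb⟩

set_option maxHeartbeats 2000000 in
lemma comp_sol (w : V → V → ℝ) (hsymm : ∀ x y, w x y = w y x)
    (hnonneg : ∀ x y, 0 ≤ w x y)
    (mu : V → ℝ) (hmu : ∀ x, 0 < mu x)
    (D B : Finset V)
    (lam1 gam p : ℝ) (hgam : gam < lam1) (hp : 2 < p)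
    (hlb : ∀ u : V → ℝ, (∀ x ∈ B, u x = 0) → (∃ x ∈ D, u x ≠ 0) →
      lam1 * gInt mu D (fun x => (u x) ^ 2) ≤ gInt mu D (slopeSq w mu u))
    (C : Finset V) (hCD : C ⊆ D) (hCB : ∀ x ∈ C, x ∉ B) (hCne : C.Nonempty)
    (hngh : ∀ a ∈ C, ∀ y, 0 < w a y → y ∈ D)
    (hconnC : ∀ x ∈ C, ∀ y ∈ C,
      Relation.ReflTransGen (fun a b => a ∈ C ∧ b ∈ C ∧ 0 < w a b) x y) :
    ∃ u : V → ℝ, (∀ z, z ∉ C → u z = 0) ∧ (∀ x ∈ C, 0 < u x) ∧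
      ∀ x ∈ C, -(lapl w mu u x) = gam * u x + (u x) ^ (p - 1) := by
  have hp0 : (0:ℝ) < p := by linarith
  have hpne : p ≠ 0 := hp0.ne'
  have hp2 : (0:ℝ) < p - 2 := by linarith
  set K : Set (V → ℝ) :=
    {u | (∀ z, z ∉ C → u z = 0) ∧ (∀ z, 0 ≤ u z) ∧ Nfun mu C p u = 1} with hK_def
  -- K is nonempty
  have hKne : K.Nonempty := by
    obtain ⟨x₀, hx₀⟩ := hCne
    set c : ℝ := (1 / mu x₀) ^ ((1:ℝ)/p) with hc_def
    have hcpos : 0 < c := Real.rpow_pos_of_pos (one_div_pos.mpr (hmu x₀)) _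
    refine ⟨fun z => c * delt x₀ z, fun z hz => ?_, fun z => ?_, ?_⟩
    · have : z ≠ x₀ := fun h => hz (h ▸ hx₀)
      show c * delt x₀ z = 0
      simp [delt, this]
    · show 0 ≤ c * delt x₀ z
      by_cases h : z = x₀ <;> simp [delt, h, hcpos.le]
    · rw [Nfun_smul]
      have hNd : Nfun mu C p (delt x₀) = mu x₀ := by
        unfold Nfun
        rw [Finset.sum_eq_single_of_mem x₀ hx₀ (fun x _ hxd => by
          simp [delt, hxd, Real.zero_rpow hpne])]
        simp [delt]
      rw [hNd, abs_of_pos hcpos, hc_def, ← Real.rpow_mul (one_div_nonneg.mpr (hmu x₀).le),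
        one_div_mul_cancel hpne, Real.rpow_one, one_div,
        inv_mul_cancel₀ (hmu x₀).ne']
  -- K is compact
  have hKcpt : IsCompact K := by
    have hKclosed : IsClosed K := by
      have h1 : IsClosed {u : V → ℝ | ∀ z, z ∉ C → u z = 0} := by
        have heq : {u : V → ℝ | ∀ z, z ∉ C → u z = 0}
            = ⋂ z, ⋂ (_ : z ∉ C), {u : V → ℝ | u z = 0} := by
          ext u; simp
        rw [heq]
        exact isClosed_iInter fun z => isClosed_iInter fun _ =>
          isClosed_eq (continuous_apply z) continuous_const
      have h2 : IsClosed {u : V → ℝ | ∀ z, 0 ≤ u z} := by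
        have heq : {u : V → ℝ | ∀ z, 0 ≤ u z} = ⋂ z, {u : V → ℝ | 0 ≤ u z} := by
          ext u; simp
        rw [heq]
        exact isClosed_iInter fun z =>
          isClosed_le continuous_const (continuous_apply z)
      have h3 : IsClosed {u : V → ℝ | Nfun mu C p u = 1} :=
        isClosed_eq (Nfun_continuous mu C p hp0) continuous_const
      have heqK : K = {u : V → ℝ | ∀ z, z ∉ C → u z = 0}
          ∩ ({u : V → ℝ | ∀ z, 0 ≤ u z} ∩ {u : V → ℝ | Nfun mu C p u = 1}) := by
        ext u
        simp only [hK_def, Set.mem_setOf_eq, Set.mem_inter_iff]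
      rw [heqK]
      exact h1.inter (h2.inter h3)
    have hbd : Bornology.IsBounded K := by
      set R : ℝ := ∑ x : V, (1 / mu x) ^ ((1:ℝ)/p) with hR_def
      have hR0 : 0 ≤ R :=
        Finset.sum_nonneg fun x _ =>
          Real.rpow_nonneg (one_div_nonneg.mpr (hmu x).le) _
      refine (Metric.isBounded_closedBall (x := (0 : V → ℝ)) (r := R)).subset ?_
      intro u hu
      obtain ⟨husupp, hunn, huN⟩ := hu
      rw [Metric.mem_closedBall, dist_zero_right]
      refine (pi_norm_le_iff_of_nonneg hR0).mpr fun z => ?_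
      rw [Real.norm_eq_abs]
      by_cases hz : z ∈ C
      · have hterm : mu z * |u z| ^ p ≤ 1 := by
          rw [← huN]
          exact Finset.single_le_sum (f := fun x => mu x * |u x| ^ p)
            (fun x _ => mul_nonneg (hmu x).le (Real.rpow_nonneg (abs_nonneg _) _)) hz
        have h1 : |u z| ^ p ≤ 1 / mu z := by
          rw [le_div_iff₀ (hmu z)]
          linarith [hterm]
        have h2 : |u z| = (|u z| ^ p) ^ ((1:ℝ)/p) := by
          rw [← Real.rpow_mul (abs_nonneg _), mul_one_div_cancel hpne, Real.rpow_one]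
        calc |u z| = (|u z| ^ p) ^ ((1:ℝ)/p) := h2
          _ ≤ (1 / mu z) ^ ((1:ℝ)/p) :=
              Real.rpow_le_rpow (Real.rpow_nonneg (abs_nonneg _) _) h1
                (one_div_nonneg.mpr hp0.le)
          _ ≤ R := Finset.single_le_sum (f := fun x => (1 / mu x) ^ ((1:ℝ)/p))
              (fun x _ => Real.rpow_nonneg (one_div_nonneg.mpr (hmu x).le) _)
              (Finset.mem_univ z)
      · rw [husupp z hz, abs_zero]
        exact hR0
    exact Metric.isCompact_of_isClosed_isBounded hKclosed hbd
  -- minimizer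
  obtain ⟨u₀, hu₀K, hminOn⟩ :=
    hKcpt.exists_isMinOn hKne (Jfun_continuous w mu D gam).continuousOn
  obtain ⟨hu₀supp, hu₀nn, hu₀N⟩ := hu₀K
  set m : ℝ := Jfun w mu D gam u₀ with hm_def
  have hmin : ∀ v ∈ K, m ≤ Jfun w mu D gam v := fun v hv => isMinOn_iff.mp hminOn v hv
  -- nonvanishing from the constraint
  have hNzero : ∀ v : V → ℝ, Nfun mu C p v = 1 → ∃ x ∈ C, v x ≠ 0 := by
    intro v hv
    by_contra hall
    push_neg at hall
    have : Nfun mu C p v = 0 := Finset.sum_eq_zero fun x hx => by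
      rw [hall x hx]
      simp [Real.zero_rpow hpne]
    rw [this] at hv
    norm_num at hv
  -- coercivity
  have hJlow : ∀ v : V → ℝ, (∀ z, z ∉ C → v z = 0) → (∃ x ∈ C, v x ≠ 0) →
      (lam1 - gam) * gInt mu D (fun x => (v x) ^ 2) ≤ Jfun w mu D gam v := by
    intro v h1 h2
    have hB0 : ∀ x ∈ B, v x = 0 := fun x hx => h1 x (fun hC => hCB x hC hx)
    obtain ⟨x, hxC, hxne⟩ := h2
    have := hlb v hB0 ⟨x, hCD hxC, hxne⟩
    unfold Jfun
    nlinarith [this]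
  have hsqpos : ∀ v : V → ℝ, (∃ x ∈ C, v x ≠ 0) →
      0 < gInt mu D (fun x => (v x) ^ 2) := by
    intro v ⟨x, hxC, hxne⟩
    refine Finset.sum_pos' (fun y _ => mul_nonneg (hmu y).le (sq_nonneg _)) ?_
    exact ⟨x, hCD hxC, mul_pos (hmu x) (pow_two_pos_of_ne_zero hxne)⟩
  have hmpos : 0 < m := by
    obtain hex := hNzero u₀ hu₀N
    calc (0:ℝ) < (lam1 - gam) * gInt mu D (fun x => (u₀ x) ^ 2) :=
          mul_pos (by linarith) (hsqpos u₀ hex)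
      _ ≤ m := hJlow u₀ hu₀supp hex
  -- scaling inequality
  have hscale : ∀ v : V → ℝ, (∀ z, z ∉ C → v z = 0) → (∀ z, 0 ≤ v z) →
      0 < Nfun mu C p v →
      m * (Nfun mu C p v) ^ ((2:ℝ)/p) ≤ Jfun w mu D gam v := by
    intro v hsupp hnn hN
    set Nv : ℝ := Nfun mu C p v with hNv_def
    set sc : ℝ := Nv ^ (-(1/p)) with hsc_def
    have hscpos : 0 < sc := Real.rpow_pos_of_pos hN _
    have hvK : (fun z => sc * v z) ∈ K := by
      refine ⟨fun z hz => by show sc * v z = 0; rw [hsupp z hz, mul_zero],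
        fun z => mul_nonneg hscpos.le (hnn z), ?_⟩
      rw [Nfun_smul, abs_of_pos hscpos, hsc_def, ← Real.rpow_mul hN.le]
      rw [show -(1/p) * p = -1 by field_simp, Real.rpow_neg_one,
        inv_mul_cancel₀ hN.ne']
    have h1 := hmin _ hvK
    rw [Jfun_smul w mu hmu] at h1
    have hs2 : sc ^ 2 = Nv ^ (-(2/p) : ℝ) := by
      rw [hsc_def, ← Real.rpow_natCast (Nv ^ (-(1/p))) 2, ← Real.rpow_mul hN.le]
      norm_num
      rw [show -(p⁻¹ * 2) = -(2/p) by ring]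
    rw [hs2] at h1
    have hpow : (0:ℝ) < Nv ^ ((2:ℝ)/p) := Real.rpow_pos_of_pos hN _
    have h2 := mul_le_mul_of_nonneg_right h1 hpow.le
    calc m * Nv ^ ((2:ℝ)/p) ≤ Nv ^ (-(2/p) : ℝ) * Jfun w mu D gam v * Nv ^ ((2:ℝ)/p) := h2
      _ = (Nv ^ (-(2/p) : ℝ) * Nv ^ ((2:ℝ)/p)) * Jfun w mu D gam v := by ring
      _ = Jfun w mu D gam v := by
          rw [← Real.rpow_add hN]
          norm_num
  -- positivity of the minimizer
  have hQd : ∀ (u : V → ℝ) (d : V), d ∈ C →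
      Q2 w D u (delt d) = -2 * ∑ y, w d y * (u y - u d) :=
    fun u d hd => Q2_delta w hsymm hnonneg D C hCD hngh u d hd
  have hpos : ∀ x ∈ C, 0 < u₀ x := by
    intro x hxC
    by_contra hcon
    have hx0 : u₀ x = 0 := le_antisymm (not_lt.mp hcon) (hu₀nn x)
    obtain ⟨y, hyC, hyne⟩ := hNzero u₀ hu₀N
    have hy : 0 < u₀ y := lt_of_le_of_ne (hu₀nn y) (Ne.symm hyne)
    obtain ⟨c, d, ⟨hcC, hdC, hwcd⟩, hc, hd0⟩ :=
      chain_lemma u₀ hu₀nn (hconnC y hyC x hxC) hy hx0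
    set Ad : ℝ := ∑ y, w d y * (u₀ y - u₀ d) with hAd_def
    have hAdpos : 0 < Ad := by
      rw [hAd_def, hd0]
      have hterm : 0 < w d c * (u₀ c - 0) := by
        rw [sub_zero, ← hsymm c d] at *
        exact mul_pos (hsymm d c ▸ hwcd) hc
      calc (0:ℝ) < w d c * (u₀ c - 0) := hterm
        _ ≤ ∑ y, w d y * (u₀ y - 0) :=
          Finset.single_le_sum (f := fun y => w d y * (u₀ y - 0))
            (fun y _ => by simpa using mul_nonneg (hnonneg d y) (hu₀nn y))
            (Finset.mem_univ c)
    set Bq : ℝ := (1/2) * Q2 w D (delt d) (delt d) - gam * mu d with hBq_def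
    set t : ℝ := min 1 (Ad / (|Bq| + 1)) with ht_def
    have ht : 0 < t := lt_min one_pos (div_pos hAdpos (by positivity))
    have ht1 : t ≤ 1 := min_le_left _ _
    have ht2 : t * (|Bq| + 1) ≤ Ad := by
      rw [← le_div_iff₀ (by positivity)]
      exact min_le_right _ _
    set v : V → ℝ := fun z => u₀ z + t * delt d z with hv_def
    have hvsupp : ∀ z, z ∉ C → v z = 0 := by
      intro z hz
      have hzd : z ≠ d := fun h => hz (h ▸ hdC)
      show u₀ z + t * delt d z = 0
      rw [hu₀supp z hz]
      simp [delt, hzd]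
    have hvnn : ∀ z, 0 ≤ v z := by
      intro z
      show 0 ≤ u₀ z + t * delt d z
      have : 0 ≤ t * delt d z := by
        by_cases h : z = d <;> simp [delt, h, ht.le]
      linarith [hu₀nn z]
    have hNv : Nfun mu C p v = 1 + mu d * t ^ p := by
      rw [hv_def, Nfun_pert mu C p d hdC, hu₀N, hd0]
      rw [abs_zero, Real.zero_rpow hpne, abs_of_pos (by rw [zero_add]; exact ht : (0:ℝ) < 0 + t)]
      rw [zero_add]
      ring
    have hNv1 : 1 ≤ Nfun mu C p v := by
      rw [hNv]
      have : 0 ≤ mu d * t ^ p :=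
        mul_nonneg (hmu d).le (Real.rpow_nonneg ht.le _)
      linarith
    have hNvpos : 0 < Nfun mu C p v := lt_of_lt_of_le one_pos hNv1
    have hsc := hscale v hvsupp hvnn hNvpos
    have hpow1 : 1 ≤ (Nfun mu C p v) ^ ((2:ℝ)/p) := by
      calc (1:ℝ) = 1 ^ ((2:ℝ)/p) := (Real.one_rpow _).symm
        _ ≤ (Nfun mu C p v) ^ ((2:ℝ)/p) :=
          Real.rpow_le_rpow zero_le_one hNv1 (by positivity)
    have hmleJ : m ≤ Jfun w mu D gam v := by
      calc m = m * 1 := (mul_one m).symm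
        _ ≤ m * (Nfun mu C p v) ^ ((2:ℝ)/p) :=
          mul_le_mul_of_nonneg_left hpow1 hmpos.le
        _ ≤ Jfun w mu D gam v := hsc
    have hJv : Jfun w mu D gam v = m + t * (-2 * Ad) + t ^ 2 * Bq := by
      rw [hv_def, Jfun_pert w mu hmu D gam d (hCD hdC), hQd u₀ d hdC,
        ← hAd_def, ← hBq_def, hd0]
      ring
    rw [hJv] at hmleJ
    have hkey : 0 ≤ t * (-2 * Ad + t * Bq) := by nlinarith
    have habs : t * Bq ≤ Ad := by
      have h1 : t * Bq ≤ t * |Bq| :=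
        mul_le_mul_of_nonneg_left (le_abs_self Bq) ht.le
      have h2 : t * |Bq| ≤ t * (|Bq| + 1) :=
        mul_le_mul_of_nonneg_left (by linarith) ht.le
      linarith
    nlinarith [mul_pos ht hAdpos]
  -- Euler–Lagrange equation
  have hEL : ∀ x ∈ C, -(lapl w mu u₀ x) = gam * u₀ x + m * (u₀ x) ^ (p - 1) := by
    intro x hxC
    have hux : 0 < u₀ x := hpos x hxC
    set Ax : ℝ := ∑ y, w x y * (u₀ y - u₀ x) with hAx_def
    set a : ℝ := -2 * Ax - 2 * gam * mu x * u₀ x with ha_def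
    set b : ℝ := (1/2) * Q2 w D (delt x) (delt x) - gam * mu x with hb_def
    set c0 : ℝ := 1 - mu x * |u₀ x| ^ p with hc0_def
    have hc0nn : 0 ≤ c0 := by
      have hsplit : Nfun mu C p u₀
          = (∑ z ∈ C \ {x}, mu z * |u₀ z| ^ p) + mu x * |u₀ x| ^ p :=
        Finset.sum_eq_sum_sdiff_singleton_add hxC _
      have hrest : 0 ≤ ∑ z ∈ C \ {x}, mu z * |u₀ z| ^ p :=
        Finset.sum_nonneg fun z _ =>
          mul_nonneg (hmu z).le (Real.rpow_nonneg (abs_nonneg _) _)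
      rw [hc0_def, ← hu₀N]
      linarith [hsplit, hrest]
    set nu : ℝ → ℝ := fun t => c0 + mu x * |u₀ x + t| ^ p with hnu_def
    have hnu_eq : ∀ t : ℝ, Nfun mu C p (fun z => u₀ z + t * delt x z) = nu t := by
      intro t
      rw [Nfun_pert mu C p x hxC, hu₀N, hnu_def, hc0_def]
    set num : ℝ → ℝ := fun t => m + t * a + t ^ 2 * b with hnum_def
    have hJ_eq : ∀ t : ℝ, Jfun w mu D gam (fun z => u₀ z + t * delt x z) = num t := by
      intro t
      rw [Jfun_pert w mu hmu D gam x (hCD hxC), hQd u₀ x hxC, ← hAx_def,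
        hnum_def, ha_def, hb_def]
    set f : ℝ → ℝ := fun t => num t / (nu t) ^ ((2:ℝ)/p) with hf_def
    have hnu0 : nu 0 = 1 := by
      rw [hnu_def]
      simp [abs_of_pos hux, hc0_def]
    have hf0 : f 0 = m := by
      rw [hf_def]
      simp only [hnu0, Real.one_rpow, hnum_def]
      norm_num
    -- local minimum
    have hlocal : IsLocalMin f 0 := by
      have hmem : Set.Ioo (-(u₀ x)) (u₀ x) ∈ nhds (0:ℝ) :=
        Ioo_mem_nhds (by linarith) hux
      filter_upwards [hmem] with t ht
      obtain ⟨htl, htr⟩ := ht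
      rw [hf0]
      set v : V → ℝ := fun z => u₀ z + t * delt x z with hv_def
      have hvsupp : ∀ z, z ∉ C → v z = 0 := by
        intro z hz
        have hzd : z ≠ x := fun h => hz (h ▸ hxC)
        show u₀ z + t * delt x z = 0
        rw [hu₀supp z hz]
        simp [delt, hzd]
      have hvnn : ∀ z, 0 ≤ v z := by
        intro z
        show 0 ≤ u₀ z + t * delt x z
        by_cases h : z = x
        · subst h
          simp [delt]
          linarith
        · simp [delt, h]
          exact hu₀nn z
      have hnut : 0 < nu t := by
        show 0 < c0 + mu x * |u₀ x + t| ^ p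
        have : 0 < mu x * |u₀ x + t| ^ p :=
          mul_pos (hmu x) (Real.rpow_pos_of_pos (abs_pos.mpr (by linarith)) _)
        linarith
      have hNvpos : 0 < Nfun mu C p v := by
        show 0 < Nfun mu C p (fun z => u₀ z + t * delt x z)
        rw [hnu_eq t]
        exact hnut
      have hch := hscale v hvsupp hvnn hNvpos
      rw [show Nfun mu C p v = nu t from hnu_eq t,
        show Jfun w mu D gam v = num t from hJ_eq t] at hch
      show m ≤ num t / (nu t) ^ ((2:ℝ)/p)
      have hpow : (0:ℝ) < (nu t) ^ ((2:ℝ)/p) := Real.rpow_pos_of_pos hnut _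
      rw [le_div_iff₀ hpow]
      exact hch
    -- derivative
    have hnum' : HasDerivAt num a 0 := by
      have h1 : HasDerivAt (fun t : ℝ => m + t * a) (1 * a) 0 :=
        ((hasDerivAt_id 0).mul_const a).const_add m
      have h2 : HasDerivAt (fun t : ℝ => t ^ 2 * b) ((2 * 0 ^ 1) * b) 0 :=
        (hasDerivAt_pow 2 0).mul_const b
      have := h1.add h2
      norm_num at this
      exact this
    have hinner : HasDerivAt (fun t : ℝ => u₀ x + t) 1 0 :=
      (hasDerivAt_id 0).const_add (u₀ x)
    have hrpow : HasDerivAt (fun s : ℝ => s ^ p) (p * (u₀ x) ^ (p - 1)) (u₀ x) :=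
      Real.hasDerivAt_rpow_const (Or.inl hux.ne')
    have hcomp : HasDerivAt (fun t : ℝ => (u₀ x + t) ^ p) (p * (u₀ x) ^ (p - 1) * 1) 0 := by
      have := HasDerivAt.comp 0 (by simpa using hrpow) hinner
      exact this
    have habs : (fun t : ℝ => |u₀ x + t| ^ p) =ᶠ[nhds 0] (fun t : ℝ => (u₀ x + t) ^ p) := by
      filter_upwards [Ioo_mem_nhds (show -(u₀ x) < (0:ℝ) by linarith) hux] with t ht
      rw [abs_of_pos (by linarith [ht.1] : (0:ℝ) < u₀ x + t)]
    have hnu' : HasDerivAt nu (mu x * (p * (u₀ x) ^ (p - 1))) 0 := by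
      have h1 : HasDerivAt (fun t : ℝ => |u₀ x + t| ^ p) (p * (u₀ x) ^ (p - 1)) 0 := by
        refine HasDerivAt.congr_of_eventuallyEq ?_ habs
        simpa using hcomp
      exact (h1.const_mul (mu x)).const_add c0
    have hden' : HasDerivAt (fun t : ℝ => (nu t) ^ ((2:ℝ)/p))
        ((mu x * (p * (u₀ x) ^ (p - 1))) * ((2:ℝ)/p) * (nu 0) ^ ((2:ℝ)/p - 1)) 0 :=
      hnu'.rpow_const (Or.inl (by rw [hnu0]; norm_num))
    have hden'simp : HasDerivAt (fun t : ℝ => (nu t) ^ ((2:ℝ)/p))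
        (2 * mu x * (u₀ x) ^ (p - 1)) 0 := by
      convert hden' using 1
      rw [hnu0, Real.one_rpow, mul_one]
      field_simp
    have hne : (nu 0) ^ ((2:ℝ)/p) ≠ 0 := by
      rw [hnu0, Real.one_rpow]
      norm_num
    have hf' : HasDerivAt f
        ((a * (nu 0) ^ ((2:ℝ)/p) - num 0 * (2 * mu x * (u₀ x) ^ (p - 1)))
          / ((nu 0) ^ ((2:ℝ)/p)) ^ 2) 0 :=
      hnum'.div hden'simp hne
    have hderiv0 : deriv f 0 = 0 := hlocal.deriv_eq_zero
    rw [hf'.deriv] at hderiv0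
    rw [hnu0, Real.one_rpow] at hderiv0
    have hnum0 : num 0 = m := by rw [hnum_def]; norm_num
    rw [hnum0] at hderiv0
    -- a = 2 m mu x u₀x^{p-1}
    have hkey : a = 2 * m * mu x * (u₀ x) ^ (p - 1) := by
      have h : a * 1 - m * (2 * mu x * (u₀ x) ^ (p - 1)) = 0 := by
        rwa [one_pow, div_one] at hderiv0
      linarith
    -- unfold a, Ax
    have hAxval : Ax = -(gam * mu x * u₀ x) - m * mu x * (u₀ x) ^ (p - 1) := by
      rw [ha_def] at hkey
      linarith
    unfold lapl
    rw [← hAx_def, hAxval]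
    have hmx : mu x ≠ 0 := (hmu x).ne'
    field_simp
    ring
  -- rescale
  set s : ℝ := m ^ ((1:ℝ)/(p-2)) with hs_def
  have hspos : 0 < s := Real.rpow_pos_of_pos hmpos _
  refine ⟨fun z => s * u₀ z, fun z hz => by show s * u₀ z = 0; rw [hu₀supp z hz, mul_zero],
    fun x hx => mul_pos hspos (hpos x hx), fun x hx => ?_⟩
  have hscale_lapl : lapl w mu (fun z => s * u₀ z) x = s * lapl w mu u₀ x := by
    unfold lapl
    rw [Finset.mul_sum, Finset.mul_sum, Finset.mul_sum]
    rw [← Finset.sum_congr rfl (fun y _ => by ring :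
      ∀ y ∈ Finset.univ, (1 / mu x) * (w x y * ((fun z => s * u₀ z) y - (fun z => s * u₀ z) x))
        = s * ((1 / mu x) * (w x y * (u₀ y - u₀ x))))]
  have hsp2 : s ^ (p - 2) = m := by
    rw [hs_def, ← Real.rpow_mul hmpos.le]
    rw [one_div_mul_cancel hp2.ne', Real.rpow_one]
  have hsp1 : s ^ (p - 1) = m * s := by
    rw [show p - 1 = (p - 2) + 1 by ring, Real.rpow_add hspos, hsp2, Real.rpow_one]
  have hmulpow : (s * u₀ x) ^ (p - 1) = s ^ (p-1) * (u₀ x) ^ (p-1) :=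
    Real.mul_rpow hspos.le (hpos x hx).le
  rw [hscale_lapl]
  show -(s * lapl w mu u₀ x) = gam * (s * u₀ x) + (s * u₀ x) ^ (p - 1)
  rw [hmulpow, hsp1]
  have := hEL x hx
  linear_combination s * this
end helpers

theorem stmt_15 {V : Type*} [Fintype V] [DecidableEq V]
    (w : V → V → ℝ) (hsymm : ∀ x y, w x y = w y x)
    (hnonneg : ∀ x y, 0 ≤ w x y) (hdiag : ∀ x, w x x = 0)
    (mu : V → ℝ) (hmu : ∀ x, 0 < mu x)
    (D B : Finset V) (hBD : B ⊆ D)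
    (hbdry : ∀ x ∈ D, (x ∈ B ↔ ∃ y, y ∉ D ∧ 0 < w x y))
    (hBne : B.Nonempty) (hIne : (D \ B).Nonempty)
    (hconn : ∀ x ∈ D, ∀ y ∈ D,
      Relation.ReflTransGen (fun a b => a ∈ D ∧ b ∈ D ∧ 0 < w a b) x y)
    (lam1 : ℝ) (hlam1 : lam1 = sInf (rayleighSet w mu D B)) (hlam1pos : 0 < lam1)
    (gam p : ℝ) (hgam : gam < lam1) (hp : 2 < p) :
    ∃ u : V → ℝ, (∀ x ∈ B, u x = 0) ∧ (∀ x ∈ D \ B, 0 < u x) ∧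
      ∀ x ∈ D \ B, -(lapl w mu u x) = gam * u x + (u x) ^ (p - 1) := by
  classical
  -- lower bound from the Rayleigh quotient
  have hE_nonneg : ∀ v : V → ℝ, 0 ≤ gInt mu D (slopeSq w mu v) := by
    intro v
    refine Finset.sum_nonneg fun x _ => mul_nonneg (hmu x).le ?_
    refine mul_nonneg (one_div_nonneg.mpr (by linarith [hmu x])) ?_
    exact Finset.sum_nonneg fun y _ => mul_nonneg (hnonneg x y) (sq_nonneg _)
  have hSq_nonneg : ∀ v : V → ℝ, 0 ≤ gInt mu D (fun x => (v x) ^ 2) :=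
    fun v => Finset.sum_nonneg fun x _ => mul_nonneg (hmu x).le (sq_nonneg _)
  have hlb : ∀ u : V → ℝ, (∀ x ∈ B, u x = 0) → (∃ x ∈ D, u x ≠ 0) →
      lam1 * gInt mu D (fun x => (u x) ^ 2) ≤ gInt mu D (slopeSq w mu u) := by
    intro u hB hD
    obtain ⟨x, hxD, hxne⟩ := hD
    have hsq : 0 < gInt mu D (fun x => (u x) ^ 2) :=
      Finset.sum_pos' (fun y _ => mul_nonneg (hmu y).le (sq_nonneg _))
        ⟨x, hxD, mul_pos (hmu x) (pow_two_pos_of_ne_zero hxne)⟩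
    have hbdd : BddBelow (rayleighSet w mu D B) := by
      refine ⟨0, ?_⟩
      rintro r ⟨v, hvB, hvD, rfl⟩
      exact div_nonneg (hE_nonneg v) (hSq_nonneg v)
    have hmem : gInt mu D (slopeSq w mu u) / gInt mu D (fun x => (u x) ^ 2)
        ∈ rayleighSet w mu D B := ⟨u, hB, ⟨x, hxD, hxne⟩, rfl⟩
    have hle : lam1 ≤ gInt mu D (slopeSq w mu u) / gInt mu D (fun x => (u x) ^ 2) := by
      rw [hlam1]
      exact csInf_le hbdd hmem
    exact (le_div_iff₀ hsq).mp hle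
  -- interior and components
  set I : Finset V := D \ B with hI_def
  set relI : V → V → Prop := fun a b => a ∈ I ∧ b ∈ I ∧ 0 < w a b with hrelI_def
  have hrelIsymm : Symmetric relI := fun a b ⟨h1, h2, h3⟩ => ⟨h2, h1, hsymm a b ▸ h3⟩
  have hrtgsymm : ∀ {a b}, Relation.ReflTransGen relI a b → Relation.ReflTransGen relI b a :=
    fun h => (by haveI : Std.Symm relI := ⟨fun a b h' => hrelIsymm h'⟩; exact Std.Symm.symm _ _ h)
  set comp : V → Finset V :=
    fun x => Finset.univ.filter (fun y => y ∈ I ∧ Relation.ReflTransGen relI x y)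
    with hcomp_def
  have hmem_comp : ∀ y x : V, y ∈ comp x ↔ (y ∈ I ∧ Relation.ReflTransGen relI x y) := by
    intro y x
    simp [hcomp_def]
  have hself : ∀ x ∈ I, x ∈ comp x :=
    fun x hx => (hmem_comp x x).mpr ⟨hx, Relation.ReflTransGen.refl⟩
  have hcompsub : ∀ x, comp x ⊆ I := by
    intro x y hy
    exact ((hmem_comp y x).mp hy).1
  have hcomp_eq : ∀ x y : V, y ∈ comp x → comp y = comp x := by
    intro x y hy
    obtain ⟨hyI, hxy⟩ := (hmem_comp y x).mp hy
    ext z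
    rw [hmem_comp, hmem_comp]
    constructor
    · rintro ⟨hzI, hyz⟩
      exact ⟨hzI, hxy.trans hyz⟩
    · rintro ⟨hzI, hxz⟩
      exact ⟨hzI, (hrtgsymm hxy).trans hxz⟩
  have hInotB : ∀ x ∈ I, x ∈ D ∧ x ∉ B := by
    intro x hx
    exact Finset.mem_sdiff.mp hx
  have hnghI : ∀ a ∈ I, ∀ y, 0 < w a y → y ∈ D := by
    intro a ha y hwy
    obtain ⟨haD, haB⟩ := hInotB a ha
    by_contra hyD
    exact haB ((hbdry a haD).mpr ⟨y, hyD, hwy⟩)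
  -- strengthen connectivity to a component
  have hstrength : ∀ x : V, ∀ a ∈ comp x, ∀ b : V, Relation.ReflTransGen relI a b →
      Relation.ReflTransGen (fun u v => u ∈ comp x ∧ v ∈ comp x ∧ 0 < w u v) a b := by
    intro x a ha b h
    have hxa : Relation.ReflTransGen relI x a := ((hmem_comp a x).mp ha).2
    induction h with
    | refl => exact Relation.ReflTransGen.refl
    | tail h1 h2 ih =>
      rename_i b' c'
      have hb' : b' ∈ comp x := (hmem_comp b' x).mpr ⟨h2.1, hxa.trans h1⟩
      have hc' : c' ∈ comp x := (hmem_comp c' x).mpr ⟨h2.2.1, (hxa.trans h1).tail h2⟩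
      exact ih.tail ⟨hb', hc', h2.2.2⟩
  -- component hypotheses
  have hHyp : ∀ x ∈ I, (comp x ⊆ D) ∧ (∀ z ∈ comp x, z ∉ B) ∧ (comp x).Nonempty ∧
      (∀ a ∈ comp x, ∀ y, 0 < w a y → y ∈ D) ∧
      (∀ a ∈ comp x, ∀ b ∈ comp x,
        Relation.ReflTransGen (fun u v => u ∈ comp x ∧ v ∈ comp x ∧ 0 < w u v) a b) := by
    intro x hx
    refine ⟨fun z hz => (hInotB z (hcompsub x hz)).1,
      fun z hz => (hInotB z (hcompsub x hz)).2,
      ⟨x, hself x hx⟩,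
      fun a ha y hy => hnghI a (hcompsub x ha) y hy,
      fun a ha b hb => ?_⟩
    have hxa : Relation.ReflTransGen relI x a := ((hmem_comp a x).mp ha).2
    have hxb : Relation.ReflTransGen relI x b := ((hmem_comp b x).mp hb).2
    exact hstrength x a ha b ((hrtgsymm hxa).trans hxb)
  -- solution for each component via choice
  set Hyp : Finset V → Prop := fun C => (C ⊆ D) ∧ (∀ z ∈ C, z ∉ B) ∧ C.Nonempty ∧
      (∀ a ∈ C, ∀ y, 0 < w a y → y ∈ D) ∧
      (∀ a ∈ C, ∀ b ∈ C,
        Relation.ReflTransGen (fun u v => u ∈ C ∧ v ∈ C ∧ 0 < w u v) a b) with hHyp_def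
  have hex : ∀ C : Finset V, Hyp C → ∃ u : V → ℝ, (∀ z, z ∉ C → u z = 0) ∧
      (∀ z ∈ C, 0 < u z) ∧ ∀ z ∈ C, -(lapl w mu u z) = gam * u z + (u z) ^ (p - 1) :=
    fun C hC => comp_sol w hsymm hnonneg mu hmu D B lam1 gam p hgam hp hlb C
      hC.1 hC.2.1 hC.2.2.1 hC.2.2.2.1 hC.2.2.2.2
  set G : Finset V → (V → ℝ) :=
    fun C => if h : Hyp C then (hex C h).choose else 0 with hG_def
  have hG_spec : ∀ C : Finset V, Hyp C → (∀ z, z ∉ C → G C z = 0) ∧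
      (∀ z ∈ C, 0 < G C z) ∧
      ∀ z ∈ C, -(lapl w mu (G C) z) = gam * G C z + (G C z) ^ (p - 1) := by
    intro C hC
    rw [hG_def]
    simp only [dif_pos hC]
    exact (hex C hC).choose_spec
  set u : V → ℝ := fun z => if z ∈ I then G (comp z) z else 0 with hu_def
  have hHypI : ∀ x ∈ I, Hyp (comp x) := fun x hx => hHyp x hx
  -- u agrees with G (comp x) everywhere relevant
  have hu_eq : ∀ x ∈ I, ∀ y : V, 0 < w x y → u y = G (comp x) y := by
    intro x hx y hwy
    have hyD : y ∈ D := hnghI x hx y hwy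
    by_cases hyI : y ∈ I
    · have hyc : y ∈ comp x := (hmem_comp y x).mpr
        ⟨hyI, Relation.ReflTransGen.single ⟨hx, hyI, hwy⟩⟩
      rw [hu_def]
      simp only [if_pos hyI]
      rw [hcomp_eq x y hyc]
    · have h0 : u y = 0 := by rw [hu_def]; simp only [if_neg hyI]
      have h0' : G (comp x) y = 0 :=
        (hG_spec (comp x) (hHypI x hx)).1 y (fun hyc => hyI (hcompsub x hyc))
      rw [h0, h0']
  have hux : ∀ x ∈ I, u x = G (comp x) x := by
    intro x hx
    rw [hu_def]
    simp only [if_pos hx]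
  have hlapl_eq : ∀ x ∈ I, lapl w mu u x = lapl w mu (G (comp x)) x := by
    intro x hx
    unfold lapl
    congr 1
    refine Finset.sum_congr rfl fun y _ => ?_
    rcases eq_or_lt_of_le (hnonneg x y) with hw0 | hwpos
    · rw [← hw0]; ring
    · rw [hu_eq x hx y hwpos, hux x hx]
  refine ⟨u, ?_, ?_, ?_⟩
  · intro x hxB
    have hxI : x ∉ I := fun hxI => (hInotB x hxI).2 hxB
    rw [hu_def]
    simp only [if_neg hxI]
  · intro x hxI
    rw [hux x hxI]
    exact (hG_spec (comp x) (hHypI x hxI)).2.1 x (hself x hxI)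
  · intro x hxI
    rw [hlapl_eq x hxI, hux x hxI]
    exact (hG_spec (comp x) (hHypI x hxI)).2.2 x (hself x hxI)
end
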